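/- arXiv:1404.0590 — 2 statements merged into one kernel-verified Lean document; each statement's English description precedes it below -/
import Mathlib

section
/- Let f : X → X be a homeomorphism of a compact metric space. If f is (m+l, n+1)-expansive, then f is (m,n)-expansive or (l,1)-expansive. -/
variable {X : Type*} [MetricSpace X]

/-- The `k`-th iterate (`k ∈ ℤ`) of a homeomorphism, as a function. -/
noncomputable def hiter (f : X ≃ₜ X) (k : ℤ) : X → X := ⇑(f.toEquiv ^ k)

/-- A set is `δ`-separated if distinct points are at distance `> δ`. -/
def IsSeparated' (δ : ℝ) (B : Set X) : Prop :=
  ∀ x ∈ B, ∀ y ∈ B, x ≠ y → δ < dist x y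

/-- The `δ`-cardinality of a set: sup of cardinalities of `δ`-separated subsets. -/
noncomputable def dCard (δ : ℝ) (A : Set X) : ℕ∞ :=
  ⨆ B ∈ {B : Set X | B ⊆ A ∧ IsSeparated' δ B}, B.encard

/-- `(m,n)`-expansiveness with a given expansive constant `δ`. -/
def MNExpansiveWith (f : X ≃ₜ X) (m n : ℕ) (δ : ℝ) : Prop :=
  ∀ A : Set X, A.encard = m → ∃ k : ℤ, (n : ℕ∞) < dCard δ (hiter f k '' A)

/-- `(m,n)`-expansiveness. -/
def MNExpansive (f : X ≃ₜ X) (m n : ℕ) : Prop :=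
  ∃ δ > 0, MNExpansiveWith f m n δ

lemma hiter_zero (f : X ≃ₜ X) (x : X) : hiter f 0 x = x := by
  simp [hiter]

lemma dCard_le {δ : ℝ} {A : Set X} {c : ℕ∞}
    (h : ∀ B : Set X, B ⊆ A → IsSeparated' δ B → B.encard ≤ c) : dCard δ A ≤ c := by
  refine iSup₂_le ?_
  rintro B ⟨h1, h2⟩
  exact h B h1 h2

lemma le_dCard {δ : ℝ} {A B : Set X} (h1 : B ⊆ A) (h2 : IsSeparated' δ B) :
    B.encard ≤ dCard δ A :=
  le_iSup₂ (f := fun (B : Set X) (_ : B ∈ {B : Set X | B ⊆ A ∧ IsSeparated' δ B}) => B.encard)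
    B ⟨h1, h2⟩

lemma exists_pos_sep (F : Finset X) :
    ∃ r > 0, ∀ x ∈ F, ∀ y ∈ F, x ≠ y → r ≤ dist x y := by
  classical
  set s := (F ×ˢ F).filter (fun p => p.1 ≠ p.2) with hs
  rcases s.eq_empty_or_nonempty with he | hne
  · refine ⟨1, one_pos, fun x hx y hy hxy => ?_⟩
    exfalso
    have : (x, y) ∈ s := by
      simp [hs, Finset.mem_filter, hx, hy, hxy]
    simp [he] at this
  · obtain ⟨p, hp, hmin⟩ := Finset.exists_min_image s (fun p => dist p.1 p.2) hne
    have hp' : p.1 ≠ p.2 := (Finset.mem_filter.1 hp).2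
    refine ⟨dist p.1 p.2, dist_pos.2 hp', fun x hx y hy hxy => ?_⟩
    exact hmin (x, y) (by simp [hs, Finset.mem_filter, hx, hy, hxy])

/-- Points of a set whose iterates all have `δ`-cardinality at most 1 track each other. -/
lemma clique_dist (f : X ≃ₜ X) {ε : ℝ} (hε : 0 ≤ ε) {B : Set X}
    (hB : ∀ k : ℤ, dCard ε (hiter f k '' B) ≤ 1) :
    ∀ x ∈ B, ∀ y ∈ B, ∀ k : ℤ, dist (hiter f k x) (hiter f k y) ≤ ε := by
  intro x hx y hy k
  by_contra h
  push_neg at h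
  have hne : hiter f k x ≠ hiter f k y := by
    intro he
    rw [he, dist_self] at h
    exact absurd hε (not_le.2 h)
  have hsub : ({hiter f k x, hiter f k y} : Set X) ⊆ hiter f k '' B := by
    rintro z (rfl | rfl)
    · exact ⟨x, hx, rfl⟩
    · exact ⟨y, hy, rfl⟩
  have hsep : IsSeparated' ε ({hiter f k x, hiter f k y} : Set X) := by
    rintro a (rfl | rfl) b (rfl | rfl) hab
    · exact absurd rfl hab
    · exact h
    · rw [dist_comm]; exact h
    · exact absurd rfl hab
  have h2 : ({hiter f k x, hiter f k y} : Set X).encard = 2 := Set.encard_pair hne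
  have := (le_dCard hsub hsep).trans (hB k)
  rw [h2] at this
  norm_num at this

/-- Absorption: a `δ`-separated set whose points all lie within `β` of `U`
has cardinality bounded by that of `γ`-separated subsets of `U`. -/
lemma absorb {U : Set X} {n : ℕ∞} {δ β γ : ℝ} (hγ : 0 ≤ γ) (hβ : 0 ≤ β)
    (hsum : γ + 2 * β < δ)
    (hU : ∀ S' : Set X, S' ⊆ U → IsSeparated' γ S' → S'.encard ≤ n)
    {S : Set X} (hSsep : IsSeparated' δ S)
    (htrack : ∀ s ∈ S, ∃ u ∈ U, dist s u ≤ β) : S.encard ≤ n := by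
  have htrack' : ∀ s : X, ∃ u : X, s ∈ S → u ∈ U ∧ dist s u ≤ β := by
    intro s
    by_cases hs : s ∈ S
    · obtain ⟨u, hu, hd⟩ := htrack s hs
      exact ⟨u, fun _ => ⟨hu, hd⟩⟩
    · exact ⟨s, fun h => absurd h hs⟩
  choose ψ hψ using htrack'
  have hinj : Set.InjOn ψ S := by
    intro a ha b hb he
    by_contra hab
    have hd := hSsep a ha b hb hab
    have t1 : dist a b ≤ dist a (ψ a) + dist (ψ a) b := dist_triangle _ _ _
    have t2 : dist (ψ a) b = dist b (ψ b) := by rw [he, dist_comm]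
    have h2 := (hψ a ha).2
    have h3 := (hψ b hb).2
    linarith
  have hsub : ψ '' S ⊆ U := by
    rintro _ ⟨a, ha, rfl⟩
    exact (hψ a ha).1
  have hsep' : IsSeparated' γ (ψ '' S) := by
    rintro _ ⟨a, ha, rfl⟩ _ ⟨b, hb, rfl⟩ hxy
    have hab : a ≠ b := fun h => hxy (by rw [h])
    have hd := hSsep a ha b hb hab
    have t1 : dist a b ≤ dist a (ψ a) + dist (ψ a) (ψ b) + dist (ψ b) b :=
      dist_triangle4 _ _ _ _
    have h2 := (hψ a ha).2
    have h3 : dist (ψ b) b ≤ β := by rw [dist_comm]; exact (hψ b hb).2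
    linarith
  calc S.encard = (ψ '' S).encard := (hinj.encard_image).symm
    _ ≤ n := hU _ hsub hsep'

/-- A separated set inside the union of `U` and a set of diameter `≤ ε < δ`. -/
lemma clique_bound {δ ε : ℝ} (hεδ : ε < δ) {U V S : Set X} {n : ℕ∞}
    (hU : ∀ S' : Set X, S' ⊆ U → IsSeparated' δ S' → S'.encard ≤ n)
    (hV : ∀ x ∈ V, ∀ y ∈ V, dist x y ≤ ε)
    (hS : S ⊆ U ∪ V) (hsep : IsSeparated' δ S) : S.encard ≤ n + 1 := by
  have hcalc : S.encard = ((S ∩ U) ∪ (S \ U)).encard := by rw [Set.inter_union_diff]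
  rw [hcalc]
  refine (Set.encard_union_le _ _).trans (add_le_add ?_ ?_)
  · refine hU _ Set.inter_subset_right ?_
    intro x hx y hy hxy
    exact hsep x hx.1 y hy.1 hxy
  · rw [Set.encard_le_one_iff]
    intro a b ha hb
    by_contra hab
    have haV : a ∈ V := (hS ha.1).resolve_left ha.2
    have hbV : b ∈ V := (hS hb.1).resolve_left hb.2
    have := hsep a ha.1 b hb.1 hab
    have := hV a haV b hbV
    linarith

theorem stmt5 [CompactSpace X] (f : X ≃ₜ X) (m n l : ℕ) (h1 : n < m) (h2 : 1 ≤ n)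
    (h3 : 2 ≤ l) (hf : MNExpansive f (m + l) (n + 1)) :
    MNExpansive f m n ∨ MNExpansive f l 1 := by
  by_contra hcon
  push_neg at hcon
  obtain ⟨hmn, hl1⟩ := hcon
  obtain ⟨δ, hδ, hfδ⟩ := hf
  unfold MNExpansive MNExpansiveWith at hmn hl1
  push_neg at hmn hl1
  set γ : ℝ := δ / 2 with hγdef
  set β : ℝ := δ / 8 with hβdef
  have hγpos : 0 < γ := by positivity
  have hβpos : 0 < β := by positivity
  obtain ⟨A, hAcard, hAbad⟩ := hmn γ hγpos
  have hAfin : A.Finite := by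
    rw [← Set.encard_lt_top_iff, hAcard]
    exact WithTop.coe_lt_top m
  -- badness of A gives a bound for δ-separated subsets of its iterates
  have hUbound : ∀ k : ℤ, ∀ S' : Set X, S' ⊆ hiter f k '' A → IsSeparated' γ S' →
      S'.encard ≤ (n : ℕ∞) := fun k S' h1' h2' => (le_dCard h1' h2').trans (hAbad k)
  by_cases hcase : ∃ ε : ℝ, 0 < ε ∧ ε ≤ β ∧ ∃ B : Set X, B.encard = l ∧
      (∀ k : ℤ, dCard ε (hiter f k '' B) ≤ 1) ∧ B ∩ A = ∅
  · -- a clique disjoint from A exists: take C = A ∪ B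
    obtain ⟨ε, hεpos, hεβ, B, hBcard, hBbad, hBA⟩ := hcase
    have hdisj : Disjoint A B := by
      rw [Set.disjoint_iff_inter_eq_empty, Set.inter_comm]
      exact hBA
    have hCcard : (A ∪ B).encard = ((m + l : ℕ) : ℕ∞) := by
      rw [Set.encard_union_eq hdisj, hAcard, hBcard]
      push_cast
      ring
    obtain ⟨k, hk⟩ := hfδ (A ∪ B) hCcard
    have hbound : dCard δ (hiter f k '' (A ∪ B)) ≤ (n : ℕ∞) + 1 := by
      refine dCard_le fun S hsub hsep => ?_
      rw [Set.image_union] at hsub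
      refine clique_bound (ε := ε) (by linarith [hεβ]) ?_ ?_ hsub hsep
      · intro S' h1' h2'
        refine hUbound k S' h1' ?_
        intro x hx y hy hxy
        exact lt_of_le_of_lt (by linarith) (h2' x hx y hy hxy)
      · rintro _ ⟨x, hx, rfl⟩ _ ⟨y, hy, rfl⟩
        exact clique_dist f hεpos.le hBbad x hx y hy k
    have : ((n + 1 : ℕ) : ℕ∞) < (n : ℕ∞) + 1 := lt_of_lt_of_le hk hbound
    simp at this
  · -- every small clique meets A: grow a set of trackers of A
    push_neg at hcase
    have grow : ∀ N : ℕ, ∃ T : Finset X, (↑T ∩ A = ∅) ∧ N ≤ T.card ∧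
        ∀ t ∈ T, ∃ a ∈ A, ∀ k : ℤ, dist (hiter f k t) (hiter f k a) ≤ β := by
      intro N
      induction N with
      | zero => exact ⟨∅, by simp, Nat.zero_le _, by simp⟩
      | succ N ih =>
        obtain ⟨T, hTA, hTc, hTtr⟩ := ih
        classical
        set F : Finset X := T ∪ hAfin.toFinset with hF
        obtain ⟨r, hr, hrsep⟩ := exists_pos_sep F
        set ε : ℝ := min β (r / 2) with hε
        have hεpos : 0 < ε := lt_min hβpos (by linarith)
        have hεβ : ε ≤ β := min_le_left _ _
        obtain ⟨B, hBcard, hBbad⟩ := hl1 ε hεpos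
        have hclique := clique_dist f hεpos.le hBbad
        have hBnt : ∃ a b, a ∈ B ∧ b ∈ B ∧ a ≠ b := by
          rw [← Set.one_lt_encard_iff, hBcard]
          exact_mod_cast h3.trans_lt' one_lt_two
        obtain ⟨u, v, hu, hv, huv⟩ := hBnt
        -- B is not contained in F
        have hBF : ∃ y ∈ B, y ∉ F := by
          by_contra hall
          push_neg at hall
          have hd : dist u v ≤ ε := by
            have := hclique u hu v hv 0
            rwa [hiter_zero, hiter_zero] at this
          have := hrsep u (hall u hu) v (hall v hv) huv
          have hεr : ε ≤ r / 2 := min_le_right _ _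
          linarith
        obtain ⟨y, hyB, hyF⟩ := hBF
        obtain ⟨x, hxB, hxA⟩ := hcase ε hεpos hεβ B hBcard hBbad
        have hyT : y ∉ T := fun h => hyF (Finset.mem_union_left _ h)
        have hyA : y ∉ A := fun h =>
          hyF (Finset.mem_union_right _ (hAfin.mem_toFinset.2 h))
        refine ⟨insert y T, ?_, ?_, ?_⟩
        · rw [Finset.coe_insert]
          ext z
          simp only [Set.mem_inter_iff, Set.mem_insert_iff, Finset.mem_coe,
            Set.mem_empty_iff_false, iff_false, not_and]
          rintro (rfl | hz)
          · exact hyA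
          · intro hzA
            have : z ∈ (↑T : Set X) ∩ A := ⟨hz, hzA⟩
            rw [hTA] at this
            exact this
        · rw [Finset.card_insert_of_notMem hyT]
          omega
        · intro t ht
          rcases Finset.mem_insert.1 ht with rfl | htT
          · exact ⟨x, hxA, fun k => (hclique t hyB x hxB k).trans hεβ⟩
          · exact hTtr t htT
    obtain ⟨T, hTA, hTc, hTtr⟩ := grow l
    obtain ⟨T', hT'sub, hT'card⟩ := Finset.exists_subset_card_eq hTc
    have hdisj : Disjoint A (↑T' : Set X) := by
      rw [Set.disjoint_iff_inter_eq_empty, Set.inter_comm]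
      have hsub : (↑T' : Set X) ∩ A ⊆ (↑T : Set X) ∩ A :=
        Set.inter_subset_inter_left _ (Finset.coe_subset.2 hT'sub)
      rw [hTA] at hsub
      exact Set.subset_eq_empty hsub rfl
    have hCcard : (A ∪ ↑T').encard = ((m + l : ℕ) : ℕ∞) := by
      rw [Set.encard_union_eq hdisj, hAcard, Set.encard_coe_eq_coe_finsetCard, hT'card]
      push_cast
      ring
    obtain ⟨k, hk⟩ := hfδ (A ∪ ↑T') hCcard
    have hbound : dCard δ (hiter f k '' (A ∪ ↑T')) ≤ (n : ℕ∞) := by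
      refine dCard_le fun S hsub hsep => ?_
      rw [Set.image_union] at hsub
      refine absorb (γ := γ) (β := β) hγpos.le hβpos.le (by rw [hγdef, hβdef]; linarith)
        (hUbound k) hsep ?_
      intro s hs
      rcases hsub hs with ⟨a, ha, rfl⟩ | ⟨t, ht, rfl⟩
      · exact ⟨hiter f k a, ⟨a, ha, rfl⟩, by simp [hβpos.le]⟩
      · obtain ⟨a, haA, htr⟩ := hTtr t (hT'sub (Finset.mem_coe.1 ht))
        exact ⟨hiter f k a, ⟨a, haA, rfl⟩, htr k⟩
    have h' : ((n + 1 : ℕ) : ℕ∞) < (n : ℕ∞) := lt_of_lt_of_le hk hbound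
    have : n + 1 < n := by exact_mod_cast h'
    omega
end

section
/- If X is a compact metric space admitting a (4,3)-expansive homeomorphism, then X is a finite set. -/
open Function Metric Set

variable {X : Type*} [MetricSpace X]

/-- Uniform version of positive expansivity: if a pair stays `c`-close on a long enough
forward window, the initial points are `ρ`-close. -/
lemma lemU [CompactSpace X] (g : X ≃ₜ X) (c : ℝ)
    (hexp : ∀ x y : X, (∀ n : ℕ, dist ((⇑g)^[n] x) ((⇑g)^[n] y) ≤ c) → x = y)
    (ρ : ℝ) (hρ : 0 < ρ) :
    ∃ N : ℕ, ∀ x y : X, (∀ j ≤ N, dist ((⇑g)^[j] x) ((⇑g)^[j] y) ≤ c) → dist x y < ρ := by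
  set K : Set (X × X) := {p | ρ ≤ dist p.1 p.2} with hK
  have hKc : IsCompact K := by
    apply IsCompact.of_isClosed_subset isCompact_univ _ (subset_univ _)
    exact isClosed_le continuous_const (continuous_dist.comp (continuous_fst.prodMk continuous_snd))
  set V : ℕ → Set (X × X) := fun j => {p | dist ((⇑g)^[j] p.1) ((⇑g)^[j] p.2) ≤ c} with hV
  have hVc : ∀ j, IsClosed (V j) := by
    intro j
    exact isClosed_le (Continuous.dist ((g.continuous.iterate j).comp continuous_fst)
      ((g.continuous.iterate j).comp continuous_snd)) continuous_const
  have hempty : K ∩ ⋂ j, V j = ∅ := by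
    ext p
    simp only [Set.mem_inter_iff, Set.mem_iInter, Set.mem_empty_iff_false, iff_false, not_and,
      hK, hV, Set.mem_setOf_eq]
    intro hp h
    have := hexp p.1 p.2 h
    rw [this] at hp
    simp at hp
    linarith
  obtain ⟨u, hu⟩ := hKc.elim_finite_subfamily_closed V hVc hempty
  refine ⟨u.sup id, fun x y h => ?_⟩
  by_contra hcon
  push_neg at hcon
  have : (x, y) ∈ K ∩ ⋂ j ∈ u, V j := by
    refine ⟨hcon, ?_⟩
    simp only [Set.mem_iInter]
    intro j hj
    exact h j (Finset.le_sup (f := id) hj)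
  rw [hu] at this
  exact this

/-- Uniform recurrence of separation. -/
lemma lemU2 [CompactSpace X] (g : X ≃ₜ X) (c : ℝ) (hc : 0 < c)
    (hexp : ∀ x y : X, (∀ n : ℕ, dist ((⇑g)^[n] x) ((⇑g)^[n] y) ≤ c) → x = y) :
    ∃ N : ℕ, ∀ x y : X, c < dist x y →
      ∃ j, 1 ≤ j ∧ j ≤ N ∧ c < dist ((⇑g)^[j] x) ((⇑g)^[j] y) := by
  set K : Set (X × X) := {p | c ≤ dist p.1 p.2} with hK
  have hKc : IsCompact K := by
    apply IsCompact.of_isClosed_subset isCompact_univ _ (subset_univ _)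
    exact isClosed_le continuous_const (continuous_dist.comp (continuous_fst.prodMk continuous_snd))
  set V : ℕ → Set (X × X) := fun j => {p | dist ((⇑g)^[j+1] p.1) ((⇑g)^[j+1] p.2) ≤ c} with hV
  have hVc : ∀ j, IsClosed (V j) := by
    intro j
    exact isClosed_le (Continuous.dist ((g.continuous.iterate (j+1)).comp continuous_fst)
      ((g.continuous.iterate (j+1)).comp continuous_snd)) continuous_const
  have hempty : K ∩ ⋂ j, V j = ∅ := by
    ext p
    simp only [Set.mem_inter_iff, Set.mem_iInter, Set.mem_empty_iff_false, iff_false, not_and,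
      hK, hV, Set.mem_setOf_eq]
    intro hp h
    have h2 : ∀ n : ℕ, dist ((⇑g)^[n] (g p.1)) ((⇑g)^[n] (g p.2)) ≤ c := by
      intro n
      have := h n
      rwa [Function.iterate_succ_apply, Function.iterate_succ_apply] at this
    have := g.injective (hexp _ _ h2)
    rw [this] at hp
    simp at hp
    linarith
  obtain ⟨u, hu⟩ := hKc.elim_finite_subfamily_closed V hVc hempty
  refine ⟨u.sup (· + 1), fun x y h => ?_⟩
  have hxy : (x, y) ∈ K := le_of_lt h
  have : (x, y) ∉ ⋂ j ∈ u, V j := by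
    intro hmem
    have : (x, y) ∈ K ∩ ⋂ j ∈ u, V j := ⟨hxy, hmem⟩
    rw [hu] at this
    exact this
  simp only [Set.mem_iInter, not_forall] at this
  obtain ⟨j, hj, hjV⟩ := this
  refine ⟨j + 1, Nat.le_add_left 1 j, Finset.le_sup (f := (· + 1)) hj, ?_⟩
  simpa [hV, not_le] using hjV

/-- A compact metric space admitting a positively expansive homeomorphism is finite. -/
theorem posexp_finite [CompactSpace X] (g : X ≃ₜ X) (c : ℝ) (hc : 0 < c)
    (hexp : ∀ x y : X, (∀ n : ℕ, dist ((⇑g)^[n] x) ((⇑g)^[n] y) ≤ c) → x = y) :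
    Finite X := by
  classical
  -- cancellation lemmas
  have cancel1 : ∀ (n : ℕ) (z : X), (⇑g)^[n] ((⇑g.symm)^[n] z) = z := by
    intro n
    induction n with
    | zero => intro z; simp
    | succ m ih =>
      intro z
      have h1 : (⇑g.symm)^[m+1] z = (⇑g.symm)^[m] (g.symm z) := Function.iterate_succ_apply _ _ _
      rw [h1, Function.iterate_succ_apply', ih (g.symm z)]
      exact g.apply_symm_apply z
  have cancel2 : ∀ (n : ℕ) (z : X), (⇑g.symm)^[n] ((⇑g)^[n] z) = z := by
    intro n
    induction n with
    | zero => intro z; simp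
    | succ m ih =>
      intro z
      have h1 : (⇑g)^[m+1] z = (⇑g)^[m] (g z) := Function.iterate_succ_apply _ _ _
      rw [h1, Function.iterate_succ_apply', ih (g z)]
      exact g.symm_apply_apply z
  obtain ⟨N₂, hN₂⟩ := lemU2 g c hc hexp
  -- moduli of uniform continuity for backward iterates
  have hmod : ∀ j : ℕ, ∃ η > 0, ∀ x y : X, dist x y ≤ η →
      dist ((⇑g.symm)^[j] x) ((⇑g.symm)^[j] y) ≤ c := by
    intro j
    have huc : UniformContinuous ((⇑g.symm)^[j]) :=
      CompactSpace.uniformContinuous_of_continuous (g.symm.continuous.iterate j)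
    rw [Metric.uniformContinuous_iff] at huc
    obtain ⟨d, hd, hball⟩ := huc c hc
    refine ⟨d / 2, by linarith, fun x y hxy => ?_⟩
    have : dist x y < d := by linarith
    exact le_of_lt (hball this)
  choose ηf hηfpos hηf using hmod
  set η : ℝ := (Finset.range (N₂ + 1)).inf' ⟨0, Finset.mem_range.2 (Nat.succ_pos _)⟩ ηf with hη
  have hηpos : 0 < η := by
    rw [hη]; refine (Finset.lt_inf'_iff _).2 ?_
    intro j _
    exact hηfpos j
  -- equicontinuity of backward iterates
  have equi : ∀ x y : X, dist x y ≤ η → ∀ n : ℕ,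
      dist ((⇑g.symm)^[n] x) ((⇑g.symm)^[n] y) ≤ c := by
    intro x y hxy n
    induction n using Nat.strong_induction_on with
    | _ n ih =>
      by_cases hsmall : n ≤ N₂
      · apply hηf n x y
        refine le_trans hxy ?_
        exact Finset.inf'_le ηf (Finset.mem_range.2 (Nat.lt_succ_of_le hsmall))
      · push_neg at hsmall
        by_contra hcon
        push_neg at hcon
        obtain ⟨j, hj1, hjN, hjc⟩ := hN₂ _ _ hcon
        have hjn : j ≤ n := le_of_lt (lt_of_le_of_lt hjN hsmall)
        have key : ∀ z : X, (⇑g)^[j] ((⇑g.symm)^[n] z) = (⇑g.symm)^[n-j] z := by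
          intro z
          have : (⇑g.symm)^[n] z = (⇑g.symm)^[j] ((⇑g.symm)^[n-j] z) := by
            rw [← Function.iterate_add_apply]
            congr 1
            omega
          rw [this, cancel1]
        rw [key x, key y] at hjc
        have := ih (n - j) (by omega)
        linarith
  -- finiteness
  by_contra hfin
  rw [not_finite_iff_infinite] at hfin
  obtain ⟨t, hts, htfin, hcover⟩ :=
    finite_cover_balls_of_compact (isCompact_univ (X := X)) (show 0 < η / 2 by linarith)
  obtain ⟨T, hT⟩ := Infinite.exists_subset_card_eq X (htfin.toFinset.card + 2)
  -- minimum pairwise distance within T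
  set P := (T ×ˢ T).filter (fun p => p.1 ≠ p.2) with hP
  have hPne : P.Nonempty := by
    have h2 : 1 < T.card := by
      rw [hT]; omega
    obtain ⟨a, ha, b, hb, hab⟩ := Finset.one_lt_card.mp h2
    exact ⟨(a, b), by simp [hP, ha, hb, hab]⟩
  set ρ : ℝ := P.inf' hPne (fun p => dist p.1 p.2) with hρdef
  have hρpos : 0 < ρ := by
    rw [hρdef]; refine (Finset.lt_inf'_iff _).2 ?_
    rintro ⟨a, b⟩ hab
    simp only [hP, Finset.mem_filter] at hab
    exact dist_pos.mpr hab.2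
  obtain ⟨N, hN⟩ := lemU g c hexp ρ hρpos
  -- distinct points of T have η-separated N-th images
  have hsep : ∀ x ∈ T, ∀ y ∈ T, x ≠ y → η < dist ((⇑g)^[N] x) ((⇑g)^[N] y) := by
    intro x hx y hy hxy
    by_contra hcon
    push_neg at hcon
    have hwin : ∀ j ≤ N, dist ((⇑g)^[j] x) ((⇑g)^[j] y) ≤ c := by
      intro j hj
      have e1 : ∀ z : X, (⇑g.symm)^[N-j] ((⇑g)^[N] z) = (⇑g)^[j] z := by
        intro z
        have : (⇑g)^[N] z = (⇑g)^[N-j] ((⇑g)^[j] z) := by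
          rw [← Function.iterate_add_apply]
          congr 1
          omega
        rw [this, cancel2]
      rw [← e1 x, ← e1 y]
      exact equi _ _ hcon _
    have hlt := hN x y hwin
    have : ρ ≤ dist x y := by
      rw [hρdef]
      have hmem : (x, y) ∈ P := by
        rw [hP, Finset.mem_filter, Finset.mem_product]
        exact ⟨⟨hx, hy⟩, hxy⟩
      exact Finset.inf'_le (fun p => dist p.1 p.2) hmem
    linarith
  -- pigeonhole into the ball cover
  have hmaps : ∀ x ∈ T, ∃ p ∈ htfin.toFinset, (⇑g)^[N] x ∈ ball p (η / 2) := by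
    intro x _
    have : (⇑g)^[N] x ∈ ⋃ p ∈ t, ball p (η / 2) := hcover (mem_univ _)
    rw [Set.mem_iUnion₂] at this
    obtain ⟨p, hp, hball⟩ := this
    exact ⟨p, htfin.mem_toFinset.2 hp, hball⟩
  choose ctr hctr hctrball using hmaps
  have hcard : htfin.toFinset.card < T.card := by rw [hT]; omega
  have hattach : ∀ a ∈ T.attach, ctr a.1 a.2 ∈ htfin.toFinset := fun a _ => hctr a.1 a.2
  have hcard2 : htfin.toFinset.card < T.attach.card := by rwa [Finset.card_attach]
  obtain ⟨x, _, y, _, hxy, hctreq⟩ :=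
    Finset.exists_ne_map_eq_of_card_lt_of_maps_to hcard2 hattach
  have hxyne : x.1 ≠ y.1 := fun h => hxy (Subtype.ext h)
  have h1 := hctrball x.1 x.2
  have h2 := hctrball y.1 y.2
  rw [hctreq] at h1
  have hdist : dist ((⇑g)^[N] x.1) ((⇑g)^[N] y.1) < η := by
    have := dist_triangle ((⇑g)^[N] x.1) (ctr y.1 y.2) ((⇑g)^[N] y.1)
    rw [mem_ball] at h1 h2
    rw [dist_comm] at h2
    linarith
  exact absurd hdist (not_lt.2 (le_of_lt (hsep x.1 x.2 y.1 y.2 hxyne)))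

lemma hiter_natCast (f : X ≃ₜ X) (n : ℕ) (x : X) : hiter f (n : ℤ) x = (⇑f)^[n] x := by
  unfold hiter
  rw [zpow_natCast, Equiv.Perm.coe_pow]
  rfl

lemma hiter_negNatCast (f : X ≃ₜ X) (n : ℕ) (x : X) :
    hiter f (-(n : ℤ)) x = (⇑f.symm)^[n] x := by
  unfold hiter
  rw [zpow_neg, zpow_natCast, ← inv_pow, Equiv.Perm.coe_pow]
  rfl

lemma hiter_injective (f : X ≃ₜ X) (k : ℤ) : Function.Injective (hiter f k) :=
  (f.toEquiv ^ k).injective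

/-- If a 4-element set contains two distinct points at distance `≤ δ`, its
`δ`-cardinality is at most 3. -/
lemma dCard_le_three {δ : ℝ} {S : Set X} (hS : S.encard = 4) {u v : X}
    (hu : u ∈ S) (hv : v ∈ S) (huv : u ≠ v) (hd : dist u v ≤ δ) :
    ¬ (3 : ℕ∞) < dCard δ S := by
  rw [not_lt]
  unfold dCard
  refine iSup₂_le ?_
  rintro B ⟨hBS, hBsep⟩
  by_contra hB
  push_neg at hB
  have h4 : (4 : ℕ∞) ≤ B.encard := by
    have := Order.add_one_le_of_lt hB
    exact le_of_eq_of_le (by norm_num) this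
  have hSfin : S.Finite := Set.finite_of_encard_eq_coe hS
  have hBeq : B = S := hSfin.eq_of_subset_of_encard_le' hBS (hS ▸ h4)
  rw [hBeq] at hBsep
  exact absurd (hBsep u hu v hv huv) (not_lt.2 hd)

theorem stmt8 [CompactSpace X] (f : X ≃ₜ X) (hf : MNExpansive f 4 3) :
    Finite X := by
  classical
  obtain ⟨δ, hδ, h⟩ := hf
  by_contra hfin
  rw [not_finite_iff_infinite] at hfin
  have dich : (∀ x y : X, (∀ n : ℕ, dist ((⇑f)^[n] x) ((⇑f)^[n] y) ≤ δ) → x = y) ∨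
      (∀ x y : X, (∀ n : ℕ, dist ((⇑f.symm)^[n] x) ((⇑f.symm)^[n] y) ≤ δ) → x = y) := by
    by_contra hd
    push_neg at hd
    obtain ⟨⟨a, b, hab, hne_ab⟩, ⟨p, q, hpq, hne_pq⟩⟩ := hd
    -- build a 4-element superset of {a,b,p,q}
    set s₀ : Finset X := {a, b, p, q} with hs₀
    have hcard0 : s₀.card ≤ 4 := by
      rw [hs₀]
      refine le_trans (Finset.card_insert_le _ _) ?_
      refine Nat.succ_le_succ (le_trans (Finset.card_insert_le _ _) ?_)
      refine Nat.succ_le_succ (le_trans (Finset.card_insert_le _ _) ?_)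
      simp
    obtain ⟨S, hS₀S, hScard⟩ := Infinite.exists_superset_card_eq s₀ 4 hcard0
    set A : Set X := (S : Set X) with hA
    have hAcard : A.encard = (4 : ℕ) := by
      rw [hA, Set.encard_coe_eq_coe_finsetCard, hScard]
    obtain ⟨k, hk⟩ := h A hAcard
    have hmemA : ∀ z ∈ s₀, z ∈ A := fun z hz => hS₀S hz
    have haA : a ∈ A := hmemA a (by simp [hs₀])
    have hbA : b ∈ A := hmemA b (by simp [hs₀])
    have hpA : p ∈ A := hmemA p (by simp [hs₀])
    have hqA : q ∈ A := hmemA q (by simp [hs₀])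
    have hScardE : (hiter f k '' A).encard = 4 := by
      rw [Set.InjOn.encard_image ((hiter_injective f k).injOn), hAcard]
      norm_num
    -- find a non-separated pair in the image
    rcases le_or_gt 0 k with hk0 | hk0
    · obtain ⟨n, hn⟩ : ∃ n : ℕ, k = (n : ℤ) := ⟨k.toNat, (Int.toNat_of_nonneg hk0).symm⟩
      refine dCard_le_three hScardE (Set.mem_image_of_mem _ haA) (Set.mem_image_of_mem _ hbA)
        (fun hEq => hne_ab (hiter_injective f k hEq)) ?_ hk
      rw [hn, hiter_natCast, hiter_natCast]
      exact hab n
    · obtain ⟨n, hn⟩ : ∃ n : ℕ, k = -(n : ℤ) := by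
        refine ⟨(-k).toNat, ?_⟩
        rw [Int.toNat_of_nonneg (by omega)]
        omega
      refine dCard_le_three hScardE (Set.mem_image_of_mem _ hpA) (Set.mem_image_of_mem _ hqA)
        (fun hEq => hne_pq (hiter_injective f k hEq)) ?_ hk
      rw [hn, hiter_negNatCast, hiter_negNatCast]
      exact hpq n
  cases dich with
  | inl hp => exact (not_finite_iff_infinite.mpr hfin) (posexp_finite f δ hδ hp)
  | inr hp => exact (not_finite_iff_infinite.mpr hfin) (posexp_finite f.symm δ hδ hp)
end
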